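/- Let G be a subgroup of S_n and let B̃ be a 2n×n integer matrix such that σB̃ = B̃ for all σ ∈ G and B̃ is strongly admissible. Let Ω = k̄ be a G-orbit of {1,…,n}. Then the quotient matrix of μ_Ω(B̃) equals μ_{k̄} applied to the quotient matrix of B̃; that is, taking quotient matrices commutes with orbit mutation: (μ_Ω(B̃))‾ = μ_{k̄}(B̃‾). -/

import Mathlib

/-- Matrix mutation in direction `k` of a `2n × n` integer matrix, with rows indexed
by `Fin n ⊕ Fin n` (the `k`-th row being `Sum.inl k`). -/
def mutT {n : ℕ} (B : Matrix (Fin n ⊕ Fin n) (Fin n) ℤ) (k : Fin n) :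
    Matrix (Fin n ⊕ Fin n) (Fin n) ℤ :=
  Matrix.of fun i j =>
    if i = Sum.inl k ∨ j = k then -B i j
    else B i j + Int.sign (B i k) * max (B i k * B (Sum.inl k) j) 0

/-- The `G`-orbit of a row index of a `2n × n` matrix (under `σ̃ = Sum.map σ σ`). -/
def rowOrbit {n : ℕ} (G : Subgroup (Equiv.Perm (Fin n))) (i : Fin n ⊕ Fin n) :
    Set (Fin n ⊕ Fin n) :=
  {x | ∃ σ ∈ G, Sum.map (⇑σ) (⇑σ) i = x}

/-- The `G`-orbit of a column index. -/
def colOrbit {n : ℕ} (G : Subgroup (Equiv.Perm (Fin n))) (j : Fin n) : Set (Fin n) :=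
  {x | ∃ σ ∈ G, σ j = x}

/-- `G`-invariance of a `2n × n` matrix. -/
def GInvT {n : ℕ} (G : Subgroup (Equiv.Perm (Fin n)))
    (B : Matrix (Fin n ⊕ Fin n) (Fin n) ℤ) : Prop :=
  ∀ σ ∈ G, ∀ i j, B (Sum.map (⇑σ) (⇑σ) i) (σ j) = B i j

/-- Admissibility: `b_{ij} = 0` whenever the column indices `i`, `j` lie in the same
`G`-orbit. -/
def Admissible {n : ℕ} (G : Subgroup (Equiv.Perm (Fin n)))
    (B : Matrix (Fin n ⊕ Fin n) (Fin n) ℤ) : Prop :=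
  ∀ i j : Fin n, j ∈ colOrbit G i → B (Sum.inl i) j = 0

/-- Strong admissibility: admissibility together with the sign conditions (1) and (2). -/
def StronglyAdmissible {n : ℕ} (G : Subgroup (Equiv.Perm (Fin n)))
    (B : Matrix (Fin n ⊕ Fin n) (Fin n) ℤ) : Prop :=
  Admissible G B ∧
    (∀ i i' : Fin n ⊕ Fin n, i' ∈ rowOrbit G i → ∀ ℓ : Fin n, 0 ≤ B i ℓ * B i' ℓ) ∧
    (∀ j j' : Fin n, j' ∈ colOrbit G j → ∀ ℓ : Fin n ⊕ Fin n, 0 ≤ B ℓ j * B ℓ j')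

/-- The entry of the quotient matrix at the pair of orbits of `i` and `j`. -/
noncomputable def qEnt {n : ℕ} (G : Subgroup (Equiv.Perm (Fin n)))
    (B : Matrix (Fin n ⊕ Fin n) (Fin n) ℤ) (i : Fin n ⊕ Fin n) (j : Fin n) : ℤ :=
  ∑ᶠ ℓ ∈ rowOrbit G i, B ℓ j

section helpers
variable {n : ℕ} (G : Subgroup (Equiv.Perm (Fin n)))

lemma sumMap_sumMap (σ τ : Equiv.Perm (Fin n)) (i : Fin n ⊕ Fin n) :
    Sum.map (⇑σ) (⇑σ) (Sum.map (⇑τ) (⇑τ) i) = Sum.map (⇑(σ * τ)) (⇑(σ * τ)) i := by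
  cases i <;> rfl

lemma colOrbit_self (k : Fin n) : k ∈ colOrbit G k := ⟨1, G.one_mem, rfl⟩

lemma rowOrbit_self (i : Fin n ⊕ Fin n) : i ∈ rowOrbit G i :=
  ⟨1, G.one_mem, by cases i <;> rfl⟩

lemma colOrbit_symm {a b : Fin n} (h : a ∈ colOrbit G b) : b ∈ colOrbit G a := by
  obtain ⟨σ, hσ, rfl⟩ := h
  exact ⟨σ⁻¹, G.inv_mem hσ, by simp⟩

lemma colOrbit_trans {a b c : Fin n} (hab : a ∈ colOrbit G b) (hbc : b ∈ colOrbit G c) :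
    a ∈ colOrbit G c := by
  obtain ⟨σ, hσ, rfl⟩ := hab
  obtain ⟨τ, hτ, rfl⟩ := hbc
  exact ⟨σ * τ, G.mul_mem hσ hτ, rfl⟩

lemma rowOrbit_symm {a b : Fin n ⊕ Fin n} (h : a ∈ rowOrbit G b) : b ∈ rowOrbit G a := by
  obtain ⟨σ, hσ, rfl⟩ := h
  refine ⟨σ⁻¹, G.inv_mem hσ, ?_⟩
  rw [sumMap_sumMap, inv_mul_cancel]
  cases b <;> rfl

lemma rowOrbit_trans {a b c : Fin n ⊕ Fin n} (hab : a ∈ rowOrbit G b)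
    (hbc : b ∈ rowOrbit G c) : a ∈ rowOrbit G c := by
  obtain ⟨σ, hσ, rfl⟩ := hab
  obtain ⟨τ, hτ, rfl⟩ := hbc
  exact ⟨σ * τ, G.mul_mem hσ hτ, (sumMap_sumMap σ τ c).symm⟩

lemma inl_mem_rowOrbit_inl {a b : Fin n} (h : a ∈ colOrbit G b) :
    (Sum.inl a : Fin n ⊕ Fin n) ∈ rowOrbit G (Sum.inl b) := by
  obtain ⟨σ, hσ, rfl⟩ := h
  exact ⟨σ, hσ, rfl⟩

lemma mem_colOrbit_of_inl_mem {a b : Fin n}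
    (h : (Sum.inl a : Fin n ⊕ Fin n) ∈ rowOrbit G (Sum.inl b)) : a ∈ colOrbit G b := by
  obtain ⟨σ, hσ, he⟩ := h
  exact ⟨σ, hσ, by simpa using he⟩

lemma abs_sum_of_pairwise {α : Type*} (s : Finset α) (f : α → ℤ)
    (h : ∀ x ∈ s, ∀ y ∈ s, 0 ≤ f x * f y) : ∑ x ∈ s, |f x| = |∑ x ∈ s, f x| := by
  by_cases hx : ∃ x ∈ s, 0 < f x
  · obtain ⟨x, hxs, hfx⟩ := hx
    have hnn : ∀ y ∈ s, 0 ≤ f y := by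
      intro y hy
      by_contra hneg
      push_neg at hneg
      exact absurd (h y hy x hxs) (not_le.2 (mul_neg_of_neg_of_pos hneg hfx))
    rw [abs_of_nonneg (Finset.sum_nonneg hnn)]
    exact Finset.sum_congr rfl fun y hy => abs_of_nonneg (hnn y hy)
  · push_neg at hx
    have hnp : ∀ y ∈ s, f y ≤ 0 := fun y hy => hx y hy
    have : ∑ x ∈ s, f x ≤ 0 := Finset.sum_nonpos hnp
    rw [abs_of_nonpos this, ← Finset.sum_neg_distrib]
    exact Finset.sum_congr rfl fun y hy => abs_of_nonpos (hnp y hy)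

lemma two_mul_sign_max (a b : ℤ) :
    2 * (Int.sign a * max (a * b) 0) = |a| * b + a * |b| := by
  rcases lt_trichotomy a 0 with ha | ha | ha <;>
    rcases lt_trichotomy b 0 with hb | hb | hb <;>
    simp_all [abs_of_pos, abs_of_neg, Int.sign_eq_one_of_pos, Int.sign_eq_neg_one_of_neg,
      max_eq_left, max_eq_right, le_of_lt, mul_pos, mul_nonneg]
  all_goals first
    | (rw [max_eq_left (mul_pos_of_neg_of_neg ha hb).le]; ring)
    | exact (mul_neg_of_neg_of_pos ha hb).le
    | exact (mul_neg_of_pos_of_neg ha hb).le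
    | ring

end helpers

section main2
variable {n : ℕ} (G : Subgroup (Equiv.Perm (Fin n)))
  (B : Matrix (Fin n ⊕ Fin n) (Fin n) ℤ)

lemma sumMap_mem_rowOrbit_iff {σ : Equiv.Perm (Fin n)} (hσ : σ ∈ G)
    (ℓ i : Fin n ⊕ Fin n) :
    Sum.map (⇑σ) (⇑σ) ℓ ∈ rowOrbit G i ↔ ℓ ∈ rowOrbit G i := by
  constructor
  · intro h
    have h2 : ℓ ∈ rowOrbit G (Sum.map (⇑σ) (⇑σ) ℓ) := by
      refine ⟨σ⁻¹, G.inv_mem hσ, ?_⟩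
      rw [sumMap_sumMap, inv_mul_cancel]
      cases ℓ <;> rfl
    exact rowOrbit_trans G h2 h
  · intro h
    exact rowOrbit_trans G ⟨σ, hσ, rfl⟩ h

/-- The composite mutation entry formula. -/
lemma foldl_mutT_entry (hadm : Admissible G B) (k : Fin n)
    (l : List (Fin n)) (hnd : l.Nodup) (hsub : ∀ j ∈ l, j ∈ colOrbit G k) :
    ∀ i j, (l.foldl mutT B) i j =
      if (∃ k' ∈ l, i = Sum.inl k') ∨ j ∈ l then -B i j
      else B i j + ∑ k' ∈ l.toFinset,
        Int.sign (B i k') * max (B i k' * B (Sum.inl k') j) 0 := by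
  have hzero : ∀ a ∈ l, ∀ b ∈ l, B (Sum.inl a) b = 0 := by
    intro a ha b hb
    exact hadm a b (colOrbit_trans G (hsub b hb) (colOrbit_symm G (hsub a ha)))
  clear hadm
  revert hnd hsub hzero
  induction l using List.reverseRecOn with
  | nil => intro _ _ _ i j; simp
  | append_singleton l₀ k₀ ih =>
    intro hnd hsub hzero i j
    have hnd₀ : l₀.Nodup := (List.nodup_append.mp hnd).1
    have hk₀ : k₀ ∉ l₀ := by
      intro h
      exact (List.nodup_append'.mp hnd).2.2 h (List.mem_singleton_self k₀)
    have hk₀l : k₀ ∈ l₀ ++ [k₀] := by simp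
    have hsub₀ : ∀ j ∈ l₀, j ∈ colOrbit G k := fun j hj => hsub j (by simp [hj])
    have hzero₀ : ∀ a ∈ l₀, ∀ b ∈ l₀, B (Sum.inl a) b = 0 := fun a ha b hb =>
      hzero a (by simp [ha]) b (by simp [hb])
    have IH := ih hnd₀ hsub₀ hzero₀
    rw [List.foldl_append]
    simp only [List.foldl_cons, List.foldl_nil]
    set C := l₀.foldl mutT B with hC
    show mutT C k₀ i j = _
    simp only [mutT, Matrix.of_apply]
    by_cases hmain : i = Sum.inl k₀ ∨ j = k₀
    · rw [if_pos hmain]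
      have hcond : (∃ k' ∈ l₀ ++ [k₀], i = Sum.inl k') ∨ j ∈ l₀ ++ [k₀] := by
        rcases hmain with h | h
        · exact Or.inl ⟨k₀, hk₀l, h⟩
        · exact Or.inr (by simp [h])
      rw [if_pos hcond]
      have hCB : C i j = B i j := by
        rw [IH i j]
        split_ifs with h₀
        · rcases h₀ with ⟨k', hk', hi⟩ | hj
          · have hjk₀ : j = k₀ := by
              rcases hmain with h | h
              · exfalso; apply hk₀
                have : k' = k₀ := by
                  rw [hi] at h; exact (Sum.inl.injEq _ _).mp h
                rwa [this] at hk'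
              · exact h
            rw [hi, hjk₀, hzero k' (by simp [hk']) k₀ hk₀l, neg_zero]
          · have hik₀ : i = Sum.inl k₀ := by
              rcases hmain with h | h
              · exact h
              · exact absurd (h ▸ hj) hk₀
            rw [hik₀, hzero k₀ hk₀l j (by simp [hj]), neg_zero]
        · rw [Finset.sum_eq_zero, add_zero]
          intro k' hk'
          have hk'l₀ : k' ∈ l₀ := List.mem_toFinset.mp hk'
          rcases hmain with h | h
          · rw [h, hzero k₀ hk₀l k' (by simp [hk'l₀])]; simp
          · rw [h, hzero k' (by simp [hk'l₀]) k₀ hk₀l]; simp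
      rw [hCB]
    · rw [if_neg hmain]
      push_neg at hmain
      obtain ⟨hik₀, hjk₀⟩ := hmain
      by_cases hA : ∃ k' ∈ l₀, i = Sum.inl k'
      · have hCik₀ : C i k₀ = 0 := by
          rw [IH i k₀, if_pos (Or.inl hA)]
          obtain ⟨k', hk', rfl⟩ := hA
          rw [hzero k' (by simp [hk']) k₀ hk₀l, neg_zero]
        have hCij : C i j = -B i j := by rw [IH i j, if_pos (Or.inl hA)]
        rw [if_pos (Or.inl (by obtain ⟨k', hk', hi⟩ := hA; exact ⟨k', by simp [hk'], hi⟩))]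
        rw [hCij, hCik₀]; simp
      · by_cases hB : j ∈ l₀
        · have hCj : C (Sum.inl k₀) j = 0 := by
            rw [IH (Sum.inl k₀) j, if_pos (Or.inr hB)]
            rw [hzero k₀ hk₀l j (by simp [hB]), neg_zero]
          have hCij : C i j = -B i j := by rw [IH i j, if_pos (Or.inr hB)]
          rw [if_pos (Or.inr (by simp [hB]))]
          rw [hCij, hCj]; simp
        · have hcond : ¬((∃ k' ∈ l₀ ++ [k₀], i = Sum.inl k') ∨ j ∈ l₀ ++ [k₀]) := by
            push_neg
            constructor
            · intro k' hk'
              simp only [List.mem_append, List.mem_singleton] at hk'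
              rcases hk' with h | h
              · intro he; exact hA ⟨k', h, he⟩
              · intro he; exact hik₀ (h ▸ he)
            · simp only [List.mem_append, List.mem_singleton]
              rintro (h | h)
              · exact hB h
              · exact hjk₀ h
          rw [if_neg hcond]
          have hCik₀ : C i k₀ = B i k₀ := by
            rw [IH i k₀, if_neg (by
              rintro (h | h)
              · exact hA h
              · exact hk₀ h)]
            rw [Finset.sum_eq_zero, add_zero]
            intro k' hk'
            rw [hzero k' (by simp [List.mem_toFinset.mp hk']) k₀ hk₀l]; simp
          have hCk₀j : C (Sum.inl k₀) j = B (Sum.inl k₀) j := by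
            rw [IH (Sum.inl k₀) j, if_neg (by
              rintro (⟨k', hk', he⟩ | h)
              · exact hk₀ (((Sum.inl.injEq _ _).mp he) ▸ hk')
              · exact hB h)]
            rw [Finset.sum_eq_zero, add_zero]
            intro k' hk'
            rw [hzero k₀ hk₀l k' (by simp [List.mem_toFinset.mp hk'])]; simp
          have hCij : C i j = B i j + ∑ k' ∈ l₀.toFinset,
              Int.sign (B i k') * max (B i k' * B (Sum.inl k') j) 0 := by
            rw [IH i j, if_neg (by
              rintro (h | h)
              · exact hA h
              · exact hB h)]
          have hfs : (l₀ ++ [k₀]).toFinset = insert k₀ l₀.toFinset := by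
            ext x; simp [List.toFinset_append, or_comm]
          rw [hCij, hCik₀, hCk₀j, hfs,
            Finset.sum_insert (by simp [hk₀])]
          ring

section main3
variable {n : ℕ} (G : Subgroup (Equiv.Perm (Fin n)))
  (B : Matrix (Fin n ⊕ Fin n) (Fin n) ℤ)

lemma qEnt_eq_sum (i : Fin n ⊕ Fin n) (j : Fin n) :
    qEnt G B i j = ∑ ℓ ∈ (Set.toFinite (rowOrbit G i)).toFinset, B ℓ j := by
  rw [qEnt, ← finsum_mem_coe_finset, Set.Finite.coe_toFinset]

lemma sum_shift (hinv : GInvT G B) {σ : Equiv.Perm (Fin n)} (hσ : σ ∈ G)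
    (i : Fin n ⊕ Fin n) (c : Fin n) (g : ℤ → ℤ) :
    ∑ ℓ ∈ (Set.toFinite (rowOrbit G i)).toFinset, g (B ℓ (σ c)) =
      ∑ ℓ ∈ (Set.toFinite (rowOrbit G i)).toFinset, g (B ℓ c) := by
  refine (Finset.sum_equiv (Equiv.sumCongr σ σ) ?_ ?_).symm
  · intro ℓ
    simp only [Set.Finite.mem_toFinset, Equiv.sumCongr_apply]
    exact (sumMap_mem_rowOrbit_iff G hσ ℓ i).symm
  · intro ℓ _
    simp only [Equiv.sumCongr_apply]
    rw [hinv σ hσ ℓ c]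

end main3

/-- For a `G`-invariant, strongly admissible exchange matrix, taking quotient matrices
commutes with orbit mutation: the quotient matrix of `μ_Ω(B̃)` equals the mutation
`μ_{k̄}` of the quotient matrix of `B̃` (stated entrywise on representatives, where
`Ω` is the `G`-orbit of `k`, enumerated by the list `l`). -/
theorem stmt_11 {n : ℕ} (G : Subgroup (Equiv.Perm (Fin n)))
    (B : Matrix (Fin n ⊕ Fin n) (Fin n) ℤ)
    (hinv : GInvT G B) (hsa : StronglyAdmissible G B)
    (k : Fin n) (l : List (Fin n)) (hnd : l.Nodup)
    (hl : ∀ j, j ∈ l ↔ j ∈ colOrbit G k) :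
    ∀ (i : Fin n ⊕ Fin n) (j : Fin n),
      ((i ∈ rowOrbit G (Sum.inl k) ∨ j ∈ colOrbit G k) →
        qEnt G (l.foldl mutT B) i j = -qEnt G B i j) ∧
      (¬(i ∈ rowOrbit G (Sum.inl k) ∨ j ∈ colOrbit G k) →
        qEnt G (l.foldl mutT B) i j =
          qEnt G B i j +
            Int.sign (qEnt G B i k) * max (qEnt G B i k * qEnt G B (Sum.inl k) j) 0) := by
  obtain ⟨hadm, hrow, hcol⟩ := hsa
  have hsub : ∀ j ∈ l, j ∈ colOrbit G k := fun j hj => (hl j).mp hj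
  have hE := foldl_mutT_entry G B hadm k l hnd hsub
  intro i j
  constructor
  · intro hcase
    rw [qEnt_eq_sum, qEnt_eq_sum, ← Finset.sum_neg_distrib]
    refine Finset.sum_congr rfl fun ℓ hℓ => ?_
    rw [Set.Finite.mem_toFinset] at hℓ
    rw [hE ℓ j, if_pos ?_]
    rcases hcase with hr | hc
    · left
      have hℓk : ℓ ∈ rowOrbit G (Sum.inl k) := rowOrbit_trans G hℓ hr
      obtain ⟨σ, hσ, he⟩ := hℓk
      exact ⟨σ k, (hl _).mpr ⟨σ, hσ, rfl⟩, by rw [← he]; rfl⟩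
    · exact Or.inr ((hl j).mpr hc)
  · intro hcase
    push_neg at hcase
    obtain ⟨hri, hcj⟩ := hcase
    set Fi := (Set.toFinite (rowOrbit G i)).toFinset with hFi
    have hnotin : ∀ ℓ ∈ Fi, ¬((∃ k' ∈ l, ℓ = Sum.inl k') ∨ j ∈ l) := by
      intro ℓ hℓ
      rw [Set.Finite.mem_toFinset] at hℓ
      rintro (⟨k', hk', rfl⟩ | hj)
      · exact hri (rowOrbit_trans G (rowOrbit_symm G hℓ)
          (inl_mem_rowOrbit_inl G (hsub k' hk')))
      · exact hcj ((hl j).mp hj)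
    rw [qEnt_eq_sum, qEnt_eq_sum]
    have hsumeq : ∑ ℓ ∈ Fi, (l.foldl mutT B) ℓ j =
        ∑ ℓ ∈ Fi, (B ℓ j + ∑ k' ∈ l.toFinset,
          Int.sign (B ℓ k') * max (B ℓ k' * B (Sum.inl k') j) 0) := by
      refine Finset.sum_congr rfl fun ℓ hℓ => ?_
      rw [hE ℓ j, if_neg (hnotin ℓ hℓ)]
    rw [hsumeq, Finset.sum_add_distrib]
    congr 1
    -- now the double sum equals the mutation correction term
    set A := qEnt G B i k with hA
    set D := qEnt G B (Sum.inl k) j with hD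
    have hAsum : ∑ ℓ ∈ Fi, B ℓ k = A := (qEnt_eq_sum G B i k).symm
    have hpairRow : ∀ ℓ ∈ Fi, ∀ ℓ' ∈ Fi, ∀ c, 0 ≤ B ℓ c * B ℓ' c := by
      intro ℓ hℓ ℓ' hℓ' c
      rw [Set.Finite.mem_toFinset] at hℓ hℓ'
      exact hrow ℓ ℓ' (rowOrbit_trans G hℓ' (rowOrbit_symm G hℓ)) c
    have hAabs : ∀ k' ∈ l.toFinset, ∑ ℓ ∈ Fi, |B ℓ k'| = |A| := by
      intro k' hk'
      obtain ⟨σ, hσ, rfl⟩ := hsub k' (List.mem_toFinset.mp hk')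
      rw [sum_shift G B hinv hσ i k (fun x => |x|), ← hAsum,
        abs_sum_of_pairwise Fi (fun ℓ => B ℓ k) (fun x hx y hy => hpairRow x hx y hy k)]
    have hAsum' : ∀ k' ∈ l.toFinset, ∑ ℓ ∈ Fi, B ℓ k' = A := by
      intro k' hk'
      obtain ⟨σ, hσ, rfl⟩ := hsub k' (List.mem_toFinset.mp hk')
      rw [← hAsum]
      exact sum_shift G B hinv hσ i k (fun x => x)
    have hDsum : ∑ k' ∈ l.toFinset, B (Sum.inl k') j = D := by
      rw [hD, qEnt_eq_sum]
      have himg : (l.toFinset.image (fun k' => (Sum.inl k' : Fin n ⊕ Fin n))) =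
          (Set.toFinite (rowOrbit G (Sum.inl k))).toFinset := by
        ext x
        simp only [Finset.mem_image, List.mem_toFinset, Set.Finite.mem_toFinset]
        constructor
        · rintro ⟨k', hk', rfl⟩
          exact inl_mem_rowOrbit_inl G (hsub k' hk')
        · rintro ⟨σ, hσ, rfl⟩
          exact ⟨σ k, (hl _).mpr ⟨σ, hσ, rfl⟩, rfl⟩
      rw [← himg, Finset.sum_image (fun x _ y _ h => Sum.inl_injective h)]
    have hDabs : ∑ k' ∈ l.toFinset, |B (Sum.inl k') j| = |D| := by
      rw [← hDsum]
      refine abs_sum_of_pairwise _ _ fun x hx y hy => ?_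
      refine hrow (Sum.inl x) (Sum.inl y) ?_ j
      refine inl_mem_rowOrbit_inl G ?_
      exact colOrbit_trans G (hsub y (List.mem_toFinset.mp hy))
        (colOrbit_symm G (hsub x (List.mem_toFinset.mp hx)))
    have key : 2 * ∑ ℓ ∈ Fi, ∑ k' ∈ l.toFinset,
        Int.sign (B ℓ k') * max (B ℓ k' * B (Sum.inl k') j) 0 =
        2 * (Int.sign A * max (A * D) 0) := by
      rw [Finset.sum_comm, Finset.mul_sum]
      calc ∑ k' ∈ l.toFinset, 2 * ∑ ℓ ∈ Fi,
            Int.sign (B ℓ k') * max (B ℓ k' * B (Sum.inl k') j) 0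
          = ∑ k' ∈ l.toFinset, (|A| * B (Sum.inl k') j + A * |B (Sum.inl k') j|) := by
            refine Finset.sum_congr rfl fun k' hk' => ?_
            rw [Finset.mul_sum]
            have : ∀ ℓ ∈ Fi, 2 * (Int.sign (B ℓ k') * max (B ℓ k' * B (Sum.inl k') j) 0)
                = |B ℓ k'| * B (Sum.inl k') j + B ℓ k' * |B (Sum.inl k') j| :=
              fun ℓ _ => two_mul_sign_max _ _
            rw [Finset.sum_congr rfl this, Finset.sum_add_distrib,
              ← Finset.sum_mul, ← Finset.sum_mul, hAabs k' hk', hAsum' k' hk']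
        _ = |A| * D + A * |D| := by
            rw [Finset.sum_add_distrib, ← Finset.mul_sum, ← Finset.mul_sum,
              hDsum, hDabs]
        _ = 2 * (Int.sign A * max (A * D) 0) := (two_mul_sign_max A D).symm
    linarith
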